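/- Let γ be a positive real number. The sum over all multi-indices α = (α_i^k)_{i,k≥1} with nonnegative integer entries and finitely many nonzero entries of the product ∏_{i,k≥1} (2ik)^{-γ α_i^k} converges if and only if γ > 1. -/

import Mathlib

open Finset

lemma aux_sum_le_prod {ι : Type*} [DecidableEq ι] (w : ι → ℝ) (hw : ∀ p, 0 ≤ w p)
    (u : Finset (ι →₀ ℕ)) (S : Finset ι) (N : ℕ)
    (hS : ∀ α ∈ u, α.support ⊆ S) (hN : ∀ α ∈ u, ∀ p, α p ≤ N) :
    ∑ α ∈ u, ∏ p ∈ α.support, w p ^ α p ≤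
      ∏ p ∈ S, ∑ n ∈ Finset.range (N + 1), w p ^ n := by
  have step1 : ∀ α ∈ u, ∏ p ∈ α.support, w p ^ α p = ∏ p ∈ S, w p ^ α p := by
    intro α hα
    refine Finset.prod_subset (hS α hα) ?_
    intro p _ hp
    rw [Finsupp.notMem_support_iff.mp hp, pow_zero]
  rw [Finset.sum_congr rfl step1, Finset.prod_sum]
  have hinj : ∀ α ∈ u, ∀ β ∈ u,
      (fun (p : ι) (_ : p ∈ S) => α p) = (fun (p : ι) (_ : p ∈ S) => β p) → α = β := by
    intro α hα β hβ h
    ext p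
    by_cases hp : p ∈ S
    · exact congrFun (congrFun h p) hp
    · rw [Finsupp.notMem_support_iff.mp fun hc => hp (hS α hα hc),
        Finsupp.notMem_support_iff.mp fun hc => hp (hS β hβ hc)]
  calc ∑ α ∈ u, ∏ p ∈ S, w p ^ α p
      = ∑ α ∈ u, ∏ x ∈ S.attach, w x.1 ^ α x.1 := by
        refine Finset.sum_congr rfl fun α _ => ?_
        rw [Finset.prod_attach S (fun p => w p ^ α p)]
    _ = ∑ g ∈ u.image (fun (α : ι →₀ ℕ) (p : ι) (_ : p ∈ S) => α p),
          ∏ x ∈ S.attach, w x.1 ^ g x.1 x.2 := by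
        rw [Finset.sum_image hinj]
    _ ≤ ∑ g ∈ S.pi (fun _ => Finset.range (N + 1)), ∏ x ∈ S.attach, w x.1 ^ g x.1 x.2 := by
        refine Finset.sum_le_sum_of_subset_of_nonneg ?_ ?_
        · intro g hg
          rw [Finset.mem_image] at hg
          obtain ⟨α, hα, rfl⟩ := hg
          rw [Finset.mem_pi]
          intro p _
          rw [Finset.mem_range]
          exact Nat.lt_succ_of_le (hN α hα p)
        · intro g _ _
          exact Finset.prod_nonneg fun x _ => pow_nonneg (hw x.1) _

theorem stmt0 (γ : ℝ) (hγ : 0 < γ) :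
    Summable (fun α : (ℕ × ℕ) →₀ ℕ =>
      ∏ p ∈ α.support,
        ((2 * (p.1 + 1) * (p.2 + 1) : ℝ)) ^ (-(γ * (α p : ℝ)))) ↔ 1 < γ := by
  set w : ℕ × ℕ → ℝ := fun p => ((2 * (p.1 + 1) * (p.2 + 1) : ℝ)) ^ (-γ) with hw
  have hbase : ∀ p : ℕ × ℕ, (2 : ℝ) ≤ 2 * (p.1 + 1) * (p.2 + 1) := by
    intro p
    have h1 : (1 : ℝ) ≤ (p.1 : ℝ) + 1 := by linarith [Nat.cast_nonneg (α := ℝ) p.1]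
    have h2 : (1 : ℝ) ≤ (p.2 : ℝ) + 1 := by linarith [Nat.cast_nonneg (α := ℝ) p.2]
    nlinarith
  have hwpos : ∀ p, 0 < w p := fun p => Real.rpow_pos_of_pos (by nlinarith [hbase p]) _
  have hterm : ∀ (α : (ℕ × ℕ) →₀ ℕ),
      (∏ p ∈ α.support, ((2 * (p.1 + 1) * (p.2 + 1) : ℝ)) ^ (-(γ * (α p : ℝ)))) =
      ∏ p ∈ α.support, w p ^ (α p) := by
    intro α
    refine Finset.prod_congr rfl fun p _ => ?_
    rw [hw, ← Real.rpow_natCast (((2 * (p.1 + 1) * (p.2 + 1) : ℝ)) ^ (-γ)) (α p),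
      ← Real.rpow_mul (by nlinarith [hbase p])]
    ring_nf
  rw [summable_congr hterm]
  constructor
  · intro h
    have hinj : Function.Injective (fun n : ℕ => (Finsupp.single (n, 0) 1 : (ℕ × ℕ) →₀ ℕ)) := by
      intro a b hab
      have := Finsupp.single_left_injective (α := ℕ × ℕ) (M := ℕ) one_ne_zero hab
      exact (Prod.mk.injEq _ _ _ _).mp this |>.1
    have h1 := h.comp_injective hinj
    have h2 : Summable (fun n : ℕ => w (n, 0)) := by
      refine h1.congr fun n => ?_
      simp [Finsupp.support_single_ne_zero _ one_ne_zero]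
    have h3 : Summable (fun n : ℕ => (2 : ℝ) ^ (-γ) * ((n : ℝ) + 1) ^ (-γ)) := by
      refine h2.congr fun n => ?_
      rw [hw]
      simp only
      rw [show (2 * ((n : ℕ) + 1) * ((0 : ℕ) + 1) : ℝ) = 2 * ((n : ℝ) + 1) by push_cast; ring,
        Real.mul_rpow (by norm_num) (by positivity)]
    have h4 : Summable (fun n : ℕ => ((n : ℝ) + 1) ^ (-γ)) :=
      (summable_mul_left_iff (ne_of_gt (Real.rpow_pos_of_pos two_pos _))).mp h3
    have h5 : Summable (fun n : ℕ => ((n : ℕ) : ℝ) ^ (-γ)) := by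
      rw [← summable_nat_add_iff 1]
      refine h4.congr fun n => ?_
      push_cast
      ring_nf
    have := Real.summable_nat_rpow.mp h5
    linarith
  · intro hγ1
    -- w p ≤ 2 ^ (-γ) < 1/2
    have hwle : ∀ p, w p ≤ (2 : ℝ) ^ (-γ) := fun p =>
      Real.rpow_le_rpow_of_nonpos two_pos (hbase p) (by linarith)
    have h2half : (2 : ℝ) ^ (-γ) < 1 / 2 := by
      have : (2 : ℝ) ^ (-γ) < 2 ^ (-1 : ℝ) :=
        Real.rpow_lt_rpow_of_exponent_lt one_lt_two (by linarith)
      rwa [Real.rpow_neg_one, show ((2 : ℝ))⁻¹ = 1 / 2 by norm_num] at this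
    have hwhalf : ∀ p, w p < 1 / 2 := fun p => lt_of_le_of_lt (hwle p) h2half
    -- summability of w
    have hnat : Summable (fun n : ℕ => ((n : ℝ) + 1) ^ (-γ)) := by
      have h5 : Summable (fun n : ℕ => ((n : ℕ) : ℝ) ^ (-γ)) :=
        Real.summable_nat_rpow.mpr (by linarith)
      rw [← summable_nat_add_iff 1] at h5
      refine h5.congr fun n => ?_
      push_cast
      ring_nf
    have hws : Summable w := by
      refine Summable.of_nonneg_of_le (fun p => (hwpos p).le) (fun p => ?_)
        (hnat.mul_of_nonneg hnat (fun n => by positivity) (fun n => by positivity))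
      calc w p ≤ ((((p.1 : ℝ) + 1) * ((p.2 : ℝ) + 1))) ^ (-γ) := by
            refine Real.rpow_le_rpow_of_nonpos (by positivity) (by nlinarith [hbase p]) (by linarith)
        _ = ((p.1 : ℝ) + 1) ^ (-γ) * ((p.2 : ℝ) + 1) ^ (-γ) :=
            Real.mul_rpow (by positivity) (by positivity)
    set T := ∑' p, w p with hT
    refine summable_of_sum_le (c := Real.exp (2 * T))
      (fun α => Finset.prod_nonneg fun p _ => pow_nonneg (hwpos p).le _) (fun u => ?_)
    set S := u.sup Finsupp.support with hSdef
    set N := u.sup (fun α => α.support.sup α) with hNdef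
    have hS : ∀ α ∈ u, α.support ⊆ S := fun α hα => Finset.le_sup hα
    have hN : ∀ α ∈ u, ∀ p, α p ≤ N := by
      intro α hα p
      by_cases hp : p ∈ α.support
      · exact le_trans (Finset.le_sup hp) (Finset.le_sup (f := fun α => α.support.sup α) hα)
      · rw [Finsupp.notMem_support_iff.mp hp]; exact Nat.zero_le _
    calc ∑ α ∈ u, ∏ p ∈ α.support, w p ^ α p
        ≤ ∏ p ∈ S, ∑ n ∈ Finset.range (N + 1), w p ^ n :=
          aux_sum_le_prod w (fun p => (hwpos p).le) u S N hS hN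
      _ ≤ ∏ p ∈ S, Real.exp (2 * w p) := by
          refine Finset.prod_le_prod (fun p _ =>
            Finset.sum_nonneg fun n _ => pow_nonneg (hwpos p).le _) (fun p _ => ?_)
          have hlt1 : w p < 1 := by linarith [hwhalf p]
          have hge : (0 : ℝ) < 1 - w p := by linarith
          calc ∑ n ∈ Finset.range (N + 1), w p ^ n
              ≤ ∑' n : ℕ, w p ^ n :=
                Summable.sum_le_tsum _ (fun n _ => pow_nonneg (hwpos p).le _)
                  (summable_geometric_of_lt_one (hwpos p).le hlt1)
            _ = (1 - w p)⁻¹ := tsum_geometric_of_lt_one (hwpos p).le hlt1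
            _ ≤ 1 + 2 * w p := by
                rw [← one_div, div_le_iff₀ hge]
                nlinarith [hwpos p, hwhalf p]
            _ ≤ Real.exp (2 * w p) := by
                have := Real.add_one_le_exp (2 * w p)
                linarith
      _ = Real.exp (∑ p ∈ S, 2 * w p) := (Real.exp_sum S _).symm
      _ ≤ Real.exp (2 * T) := by
          rw [Real.exp_le_exp, ← Finset.mul_sum]
          have := Summable.sum_le_tsum S (fun p _ => (hwpos p).le) hws
          linarith
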